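/- arXiv:1910.06216 — 2 statements merged into one kernel-verified Lean document; each statement's English description precedes it below -/
import Mathlib

section
/- Let p > 3/2 and let f be a nonnegative function with f ∈ L^p(ℝ³) ∩ L¹(ℝ³) and with the moment of order 21(p−1)(p/2+3/4)/(p−3/2) bounded, i.e. ∫_{ℝ³} f(v) (1+|v|)^{21(p−1)(p/2+3/4)/(p−3/2)} dv < ∞. Then, with s = 3/4 + p/2 (which satisfies 3/2 < s < p), there exists a constant C, depending only on p, ‖f‖_{L^p}, ‖f‖_{L¹} and the above moment, such that for every cube Q ⊂ ℝ³ of side length r ∈ (0,1): |Q|^{1/3} ( (1/|Q|) ∫_Q (1+|v|)^{15s/2} f(v)^s dv )^{1/(2s)} ( (1/|Q|) ∫_Q (1+|v|)^{3s} dv )^{1/(2s)} ≤ C r^{1 − 3/(2s)}. In particular this left-hand side is bounded by a modulus of continuity η(r) = C r^{1−3/(2s)}. -/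
open MeasureTheory Real

noncomputable section

/-- Three-dimensional Euclidean space. -/
abbrev E3 : Type := EuclideanSpace ℝ (Fin 3)

/-- The axis-parallel cube with lower corner `c` and side length `r`;
its Lebesgue measure is `r³`. -/
def cube (c : E3) (r : ℝ) : Set E3 := {v | ∀ i, c i ≤ v i ∧ v i ≤ c i + r}

lemma cube_eq (c : E3) (r : ℝ) :
    cube c r = ((MeasurableEquiv.toLp 2 (Fin 3 → ℝ)).symm) ⁻¹'
      (Set.univ.pi fun i => Set.Icc (c i) (c i + r)) := by
  ext v
  simp only [cube, Set.mem_setOf_eq, Set.mem_preimage, Set.mem_pi, Set.mem_univ,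
    Set.mem_Icc, forall_true_left]
  rfl

lemma volume_cube (c : E3) (r : ℝ) (hr : 0 ≤ r) :
    volume (cube c r) = ENNReal.ofReal (r ^ 3) := by
  rw [cube_eq,
    (EuclideanSpace.volume_preserving_symm_measurableEquiv_toLp (Fin 3)).measure_preimage
      (MeasurableSet.univ_pi (fun i => measurableSet_Icc)).nullMeasurableSet,
    volume_pi_pi]
  simp [Real.volume_Icc, ← ENNReal.ofReal_pow hr]

lemma measurableSet_cube (c : E3) (r : ℝ) : MeasurableSet (cube c r) := by
  rw [cube_eq]
  exact ((MeasurableEquiv.toLp 2 (Fin 3 → ℝ)).symm).measurable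
    (MeasurableSet.univ_pi (fun i => measurableSet_Icc))

lemma norm_sub_le_of_mem_cube {c v : E3} {r : ℝ} (hr : 0 ≤ r) (hv : v ∈ cube c r) :
    ‖v - c‖ ≤ Real.sqrt 3 * r := by
  have h : ‖v - c‖ ≤ Real.sqrt (∑ i : Fin 3, r ^ 2) := by
    rw [EuclideanSpace.norm_eq]
    apply Real.sqrt_le_sqrt
    apply Finset.sum_le_sum
    intro i _
    have h1 := (hv i).1
    have h2 := (hv i).2
    have hvc : (v - c) i = v i - c i := by simp
    rw [hvc]
    have habs : |v i - c i| ≤ r := abs_le.2 ⟨by linarith, by linarith⟩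
    calc ‖v i - c i‖ ^ 2 = |v i - c i| ^ 2 := by rw [Real.norm_eq_abs]
      _ ≤ r ^ 2 := by nlinarith [abs_nonneg (v i - c i)]
  calc ‖v - c‖ ≤ Real.sqrt (∑ i : Fin 3, r ^ 2) := h
    _ = Real.sqrt 3 * r := by
        rw [Finset.sum_const]
        simp only [Finset.card_univ, Fintype.card_fin, nsmul_eq_mul]
        rw [Real.sqrt_mul (by norm_num), Real.sqrt_sq hr]; norm_num

/-- **Verification of the cube condition** (Proposition 3.2): if `f ∈ L^p ∩ L¹(ℝ³)` for
some `p > 3/2` with moment of order `21(p−1)(p/2+3/4)/(p−3/2)` bounded, then with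
`s = 3/4 + p/2` (which satisfies `3/2 < s < p`) the weighted cube quantity is bounded by
`C r^{1 − 3/(2s)}` for every cube of side length `r ∈ (0,1)`. -/
theorem cube_condition_of_Lp
    (p : ℝ) (hp : 3/2 < p) (s : ℝ) (hs : s = 3/4 + p/2)
    (f : E3 → ℝ) (hnn : ∀ v, 0 ≤ f v) (hmeas : Measurable f)
    (hL1 : Integrable f)
    (hLp : MemLp f (ENNReal.ofReal p) (volume : Measure E3))
    (hmom : Integrable
      (fun v : E3 => f v * (1 + ‖v‖) ^ (21 * (p - 1) * (p/2 + 3/4) / (p - 3/2)))) :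
    (3/2 < s ∧ s < p) ∧
    ∃ C : ℝ, 0 ≤ C ∧ ∀ (c : E3) (r : ℝ), r ∈ Set.Ioo (0 : ℝ) 1 →
      (r ^ 3) ^ ((1 : ℝ)/3) *
          ((1 / r ^ 3) * ∫ v in cube c r, (1 + ‖v‖) ^ (15 * s / 2) * f v ^ s) ^ (1/(2*s)) *
          ((1 / r ^ 3) * ∫ v in cube c r, (1 + ‖v‖) ^ (3 * s)) ^ (1/(2*s))
        ≤ C * r ^ (1 - 3/(2*s)) := by
  set m : ℝ := 21 * (p - 1) * (p/2 + 3/4) / (p - 3/2) with hm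
  set θ : ℝ := (p - s)/(p - 1) with hθ
  have hp1 : (1:ℝ) < p := by linarith
  have hs1 : (3:ℝ)/2 < s := by rw [hs]; linarith
  have hsp : s < p := by rw [hs]; linarith
  have hs0 : (0:ℝ) < s := by linarith
  have hθ0 : 0 < θ := div_pos (by linarith) (by linarith)
  have hθ1 : θ < 1 := (div_lt_one (by linarith)).2 (by linarith)
  have h1 : p - (3:ℝ)/2 ≠ 0 := by linarith
  have h2 : p - (1:ℝ) ≠ 0 := by linarith
  have hθps : θ * (p - 1) = p - s := by rw [hθ, div_mul_cancel₀ _ h2]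
  have hmθ : m * θ = 21 * s / 2 := by
    apply mul_right_cancel₀ (mul_ne_zero h1 h2)
    calc m * θ * ((p - 3/2) * (p - 1)) = (m * (p - 3/2)) * (θ * (p - 1)) := by ring
      _ = (21 * (p - 1) * (p/2 + 3/4)) * (p - s) := by
          rw [hm, div_mul_cancel₀ _ h1, hθps]
      _ = 21 * s / 2 * ((p - 3/2) * (p - 1)) := by rw [hs]; ring
  -- integrability of the key weighted function
  have hfp : Integrable (fun v : E3 => f v ^ p) := by
    have := hLp.integrable_norm_rpow (by simp [ENNReal.ofReal_eq_zero]; linarith)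
      ENNReal.ofReal_ne_top
    simpa [ENNReal.toReal_ofReal (by linarith : (0:ℝ) ≤ p), Real.norm_eq_abs,
      abs_of_nonneg (hnn _)] using this
  set g : E3 → ℝ := fun v => (1 + ‖v‖) ^ (21 * s / 2) * f v ^ s with hg
  have hgnn : ∀ v, 0 ≤ g v := fun v =>
    mul_nonneg (Real.rpow_nonneg (by positivity) _) (Real.rpow_nonneg (hnn v) _)
  have hgmeas : Measurable g :=
    (((Real.continuous_rpow_const (by positivity)).comp
        (continuous_const.add continuous_norm)).measurable).mul
      ((Real.continuous_rpow_const hs0.le).measurable.comp hmeas)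
  have hK : Integrable g := by
    have key : ∀ v : E3, g v = (f v * (1 + ‖v‖) ^ m) ^ θ * (f v ^ p) ^ (1 - θ) := by
      intro v
      have hw : (0:ℝ) < 1 + ‖v‖ := by positivity
      rw [hg]
      simp only
      rw [Real.mul_rpow (hnn v) (Real.rpow_nonneg hw.le m),
        ← Real.rpow_mul hw.le, ← Real.rpow_mul (hnn v), hmθ]
      rw [mul_comm (f v ^ θ), mul_assoc, ← Real.rpow_add' (hnn v)]
      · congr 1
        have h3 : θ + p * (1 - θ) = s := by nlinarith [hθps]
        rw [h3]
      · have h3 : θ + p * (1 - θ) = s := by nlinarith [hθps]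
        rw [h3]; exact ne_of_gt hs0
    have hbound : ∀ v : E3, ‖g v‖ ≤ f v * (1 + ‖v‖) ^ m + f v ^ p := by
      intro v
      have hw : (0:ℝ) < 1 + ‖v‖ := by positivity
      have ha : 0 ≤ f v * (1 + ‖v‖) ^ m := mul_nonneg (hnn v) (Real.rpow_nonneg hw.le m)
      have hb : 0 ≤ f v ^ p := Real.rpow_nonneg (hnn v) p
      rw [Real.norm_eq_abs, abs_of_nonneg (hgnn v), key v]
      calc (f v * (1 + ‖v‖) ^ m) ^ θ * (f v ^ p) ^ (1 - θ)
          ≤ θ * (f v * (1 + ‖v‖) ^ m) + (1 - θ) * (f v ^ p) :=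
            Real.geom_mean_le_arith_mean2_weighted hθ0.le (by linarith) ha hb (by ring)
        _ ≤ f v * (1 + ‖v‖) ^ m + f v ^ p := by nlinarith
    refine Integrable.mono (hmom.add hfp) hgmeas.aestronglyMeasurable
      (Filter.Eventually.of_forall fun v => ?_)
    refine (hbound v).trans ?_
    have hw : (0:ℝ) < 1 + ‖v‖ := by positivity
    have ha : 0 ≤ f v * (1 + ‖v‖) ^ m := mul_nonneg (hnn v) (Real.rpow_nonneg hw.le m)
    have hb : 0 ≤ f v ^ p := Real.rpow_nonneg (hnn v) p
    rw [Pi.add_apply, Real.norm_eq_abs, abs_of_nonneg (add_nonneg ha hb)]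
  set K : ℝ := ∫ v, g v with hKdef
  have hK0 : 0 ≤ K := integral_nonneg hgnn
  refine ⟨⟨hs1, hsp⟩, (5 ^ (3*s) * K) ^ (1/(2*s)),
    Real.rpow_nonneg (mul_nonneg (Real.rpow_nonneg (by norm_num) _) hK0) _, ?_⟩
  rintro c r ⟨hr0, hr1⟩
  have hsqrt3 : Real.sqrt 3 ≤ 2 := by
    nlinarith [Real.sq_sqrt (by norm_num : (3:ℝ) ≥ 0), Real.sqrt_nonneg 3]
  set T : ℝ := 1 + ‖c‖ + Real.sqrt 3 with hT
  have hT1 : (1:ℝ) ≤ T := by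
    have := norm_nonneg c; have := Real.sqrt_nonneg 3; rw [hT]; linarith
  have hT0 : (0:ℝ) < T := by linarith
  have hdist : ∀ v ∈ cube c r, ‖v - c‖ ≤ Real.sqrt 3 := by
    intro v hv
    calc ‖v - c‖ ≤ Real.sqrt 3 * r := norm_sub_le_of_mem_cube hr0.le hv
      _ ≤ Real.sqrt 3 * 1 := by
          apply mul_le_mul_of_nonneg_left hr1.le (Real.sqrt_nonneg 3)
      _ = Real.sqrt 3 := mul_one _
  have hup : ∀ v ∈ cube c r, 1 + ‖v‖ ≤ T := by
    intro v hv
    have := norm_sub_norm_le v c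
    have := hdist v hv
    rw [hT]; linarith
  have hlow : ∀ v ∈ cube c r, T ≤ 5 * (1 + ‖v‖) := by
    intro v hv
    have h4 : ‖c‖ - ‖v‖ ≤ ‖v - c‖ := by
      have := norm_sub_norm_le c v
      rwa [norm_sub_rev] at this
    have := hdist v hv
    have := norm_nonneg v
    rw [hT]; linarith
  have hr3 : (0:ℝ) < r ^ 3 := by positivity
  have hvol : volume (cube c r) = ENNReal.ofReal (r ^ 3) := volume_cube c r hr0.le
  -- bound on I1
  set I1 : ℝ := ∫ v in cube c r, (1 + ‖v‖) ^ (15 * s / 2) * f v ^ s with hI1def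
  have hint15 : Integrable (fun v : E3 => (1 + ‖v‖) ^ (15 * s / 2) * f v ^ s) := by
    refine Integrable.mono hK
      ((((Real.continuous_rpow_const (by positivity)).comp
          (continuous_const.add continuous_norm)).measurable).mul
        ((Real.continuous_rpow_const hs0.le).measurable.comp hmeas)).aestronglyMeasurable
      (Filter.Eventually.of_forall fun v => ?_)
    have hw : (0:ℝ) < 1 + ‖v‖ := by positivity
    have hb : 0 ≤ f v ^ s := Real.rpow_nonneg (hnn v) s
    rw [Real.norm_eq_abs, Real.norm_eq_abs,
      abs_of_nonneg (mul_nonneg (Real.rpow_nonneg hw.le _) hb), abs_of_nonneg (hgnn v)]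
    exact mul_le_mul_of_nonneg_right
      (Real.rpow_le_rpow_of_exponent_le (by linarith [norm_nonneg v]) (by linarith)) hb
  have hI1nn : 0 ≤ I1 := setIntegral_nonneg (measurableSet_cube c r) fun v _ =>
    mul_nonneg (Real.rpow_nonneg (by positivity) _) (Real.rpow_nonneg (hnn v) _)
  have hI1 : I1 ≤ (5/T) ^ (3*s) * K := by
    have hKQ : ∫ v in cube c r, g v ≤ K :=
      setIntegral_le_integral hK (Filter.Eventually.of_forall hgnn)
    calc I1 ≤ ∫ v in cube c r, (5/T) ^ (3*s) * g v := by
          refine setIntegral_mono_on hint15.integrableOn (hK.const_mul _).integrableOn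
            (measurableSet_cube c r) (fun v hv => ?_)
          have hw : (0:ℝ) < 1 + ‖v‖ := by positivity
          have hb : 0 ≤ f v ^ s := Real.rpow_nonneg (hnn v) s
          have hbase : (1:ℝ) ≤ 5/T * (1 + ‖v‖) := by
            rw [div_mul_eq_mul_div, le_div_iff₀ hT0, one_mul]
            exact hlow v hv
          have hone : (1:ℝ) ≤ (5/T) ^ (3*s) * (1 + ‖v‖) ^ (3*s) := by
            rw [← Real.mul_rpow (by positivity) hw.le]
            exact Real.one_le_rpow hbase (by linarith)
          have hsplit : g v = (1 + ‖v‖) ^ (3*s) * ((1 + ‖v‖) ^ (15*s/2) * f v ^ s) := by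
            rw [hg]
            simp only
            rw [show 21 * s / 2 = 3*s + 15*s/2 by ring, Real.rpow_add hw]
            ring
          rw [hsplit]
          calc (1 + ‖v‖) ^ (15 * s / 2) * f v ^ s
              = 1 * ((1 + ‖v‖) ^ (15 * s / 2) * f v ^ s) := (one_mul _).symm
            _ ≤ ((5/T) ^ (3*s) * (1 + ‖v‖) ^ (3*s)) *
                  ((1 + ‖v‖) ^ (15 * s / 2) * f v ^ s) := by
                apply mul_le_mul_of_nonneg_right hone
                  (mul_nonneg (Real.rpow_nonneg hw.le _) hb)
            _ = (5/T) ^ (3*s) * ((1 + ‖v‖) ^ (3*s) * ((1 + ‖v‖) ^ (15*s/2) * f v ^ s)) := by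
                ring
      _ = (5/T) ^ (3*s) * ∫ v in cube c r, g v := integral_const_mul _ _
      _ ≤ (5/T) ^ (3*s) * K := by
          exact mul_le_mul_of_nonneg_left hKQ (Real.rpow_nonneg (by positivity) _)
  -- bound on I2
  set I2 : ℝ := ∫ v in cube c r, (1 + ‖v‖) ^ (3 * s) with hI2def
  have hI2nn : 0 ≤ I2 := setIntegral_nonneg (measurableSet_cube c r) fun v _ =>
    Real.rpow_nonneg (by positivity) _
  have hI2 : I2 ≤ T ^ (3*s) * r ^ 3 := by
    have hvfin : volume (cube c r) < ⊤ := by rw [hvol]; exact ENNReal.ofReal_lt_top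
    have hptw : ∀ v ∈ cube c r, ‖(1 + ‖v‖) ^ (3 * s)‖ ≤ T ^ (3*s) := by
      intro v hv
      have hw : (0:ℝ) < 1 + ‖v‖ := by positivity
      rw [Real.norm_eq_abs, abs_of_nonneg (Real.rpow_nonneg hw.le _)]
      exact Real.rpow_le_rpow hw.le (hup v hv) (by linarith)
    have hb := norm_setIntegral_le_of_norm_le_const (μ := volume) (s := cube c r)
      (f := fun v : E3 => (1 + ‖v‖) ^ (3 * s)) (C := T ^ (3*s)) hvfin hptw
    calc I2 ≤ ‖I2‖ := le_abs_self I2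
      _ ≤ T ^ (3*s) * (volume (cube c r)).toReal := hb
      _ = T ^ (3*s) * r ^ 3 := by rw [hvol, ENNReal.toReal_ofReal hr3.le]
  -- final assembly
  have he0 : (0:ℝ) < 1/(2*s) := by positivity
  have hx0 : 0 ≤ (1 / r ^ 3) * I1 := mul_nonneg (by positivity) hI1nn
  have hy0 : 0 ≤ (1 / r ^ 3) * I2 := mul_nonneg (by positivity) hI2nn
  have hxy : (1 / r ^ 3) * I1 * ((1 / r ^ 3) * I2) ≤ 5 ^ (3*s) * K * (1/r^3) := by
    have hI12 : I1 * I2 ≤ 5 ^ (3*s) * K * r ^ 3 := by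
      calc I1 * I2 ≤ ((5/T) ^ (3*s) * K) * (T ^ (3*s) * r ^ 3) :=
            mul_le_mul hI1 hI2 hI2nn (mul_nonneg (Real.rpow_nonneg (by positivity) _) hK0)
        _ = ((5/T) ^ (3*s) * T ^ (3*s)) * K * r ^ 3 := by ring
        _ = 5 ^ (3*s) * K * r ^ 3 := by
            rw [← Real.mul_rpow (by positivity) hT0.le, div_mul_cancel₀ _ (ne_of_gt hT0)]
    calc (1 / r ^ 3) * I1 * ((1 / r ^ 3) * I2) = (I1 * I2) * (1/r^3) * (1/r^3) := by ring
      _ ≤ (5 ^ (3*s) * K * r ^ 3) * (1/r^3) * (1/r^3) := by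
          apply mul_le_mul_of_nonneg_right
            (mul_le_mul_of_nonneg_right hI12 (by positivity)) (by positivity)
      _ = 5 ^ (3*s) * K * (1/r^3) := by field_simp
  have hr13 : ((r ^ 3 : ℝ)) ^ ((1:ℝ)/3) = r := by
    rw [← Real.rpow_natCast r 3, ← Real.rpow_mul hr0.le]
    norm_num
  calc (r ^ 3) ^ ((1 : ℝ)/3) * ((1 / r ^ 3) * I1) ^ (1/(2*s)) * ((1 / r ^ 3) * I2) ^ (1/(2*s))
      = r * ((1 / r ^ 3) * I1 * ((1 / r ^ 3) * I2)) ^ (1/(2*s)) := by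
        rw [hr13, mul_assoc, ← Real.mul_rpow hx0 hy0]
    _ ≤ r * (5 ^ (3*s) * K * (1/r^3)) ^ (1/(2*s)) := by
        apply mul_le_mul_of_nonneg_left
          (Real.rpow_le_rpow (mul_nonneg hx0 hy0) hxy he0.le) hr0.le
    _ = (5 ^ (3*s) * K) ^ (1/(2*s)) * r ^ (1 - 3/(2*s)) := by
        have h1r : (1/r^3 : ℝ) = r ^ (-(3:ℝ)) := by
          rw [Real.rpow_neg hr0.le, ← Real.rpow_natCast r 3]
          norm_num
        rw [Real.mul_rpow (mul_nonneg (Real.rpow_nonneg (by norm_num) _) hK0) (by positivity),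
          h1r, ← Real.rpow_mul hr0.le,
          show (1 - 3/(2*s)) = 1 + (-(3:ℝ))*(1/(2*s)) by ring,
          Real.rpow_add hr0, Real.rpow_one]
        ring

end
end

section
/- Let p > 3/2 and let f be a nonnegative function with f ∈ L¹(ℝ³) ∩ L^p(ℝ³) and ∫_{ℝ³} f(y) (1+|y|)^{3(p−1/2)(p−1)/(p−3/2)} dy < ∞. Then there exists a constant C, depending only on p, ‖f‖_{L^p}, ‖f‖_{L¹} and the above weighted integral, such that for all v ∈ ℝ³: a[f](v) = (1/(4π)) ∫_{ℝ³} f(w)/|v−w| dw ≤ C / (1+|v|). -/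
open MeasureTheory Real Set Metric
open scoped ENNReal NNReal

noncomputable section

/-- `a[f](v) = (1/(4π)) ∫ f(w)/|v−w| dw`, i.e. `a[f] = (−Δ)⁻¹ f`. -/
noncomputable def aFun (f : E3 → ℝ) (v : E3) : ℝ :=
  (1 / (4 * π)) * ∫ w : E3, f w / ‖v - w‖

lemma shells_cover {v : E3} {r : ℝ} (hr : 0 < r) :
    closedBall v r ⊆ {v} ∪ ⋃ n : ℕ,
      (closedBall v (r * (1/2) ^ n) \ closedBall v (r * (1/2) ^ (n + 1))) := by
  intro w hw
  rcases eq_or_ne w v with h | h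
  · exact Or.inl h
  · refine Or.inr ?_
    have hd : 0 < dist w v := dist_pos.mpr h
    have hle : dist w v ≤ r := mem_closedBall.mp hw
    have hex : ∃ n : ℕ, r * (1/2 : ℝ) ^ (n + 1) < dist w v := by
      obtain ⟨n, hn⟩ := exists_pow_lt_of_lt_one (div_pos hd hr) (by norm_num : (1/2:ℝ) < 1)
      refine ⟨n, ?_⟩
      calc r * (1/2:ℝ) ^ (n+1) ≤ r * (1/2:ℝ) ^ n := by
              apply mul_le_mul_of_nonneg_left _ hr.le
              apply pow_le_pow_of_le_one (by norm_num) (by norm_num)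
              omega
        _ < dist w v := by
              have := (lt_div_iff₀ hr).mp hn
              linarith [this]
    classical
    let n := Nat.find hex
    refine mem_iUnion.mpr ⟨n, ?_, ?_⟩
    · simp only [mem_closedBall]
      rcases Nat.eq_zero_or_pos n with h0 | h0
      · rw [h0]; simpa using hle
      · have := Nat.find_min hex (m := n - 1) (by omega)
        push_neg at this
        have : dist w v ≤ r * (1/2:ℝ) ^ (n - 1 + 1) := this
        simpa [Nat.sub_add_cancel h0] using this
    · simp only [mem_closedBall, not_le]
      exact Nat.find_spec hex

lemma shell_term {q r : ℝ} (n : ℕ) (hr : 0 < r) :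
    (r * (1/2:ℝ)^(n+1))^(-q) * (r * (1/2:ℝ)^n)^(3:ℕ) =
      (r^(3-q) * (1/2:ℝ)^(-q)) * ((1/2:ℝ)^((3:ℝ)-q))^n := by
  set a : ℝ := 1/2 with ha
  have h2 : (0:ℝ) < a := by norm_num
  have e1 : (r * a^(n+1))^(-q) = r^(-q) * a^((((n:ℝ))+1)*(-q)) := by
    rw [Real.mul_rpow hr.le (by positivity), ← Real.rpow_natCast a (n+1),
      ← Real.rpow_mul h2.le]
    push_cast; ring_nf
  have e2 : (r * a^n)^(3:ℕ) = r^((3:ℝ)) * a^((n:ℝ)*3) := by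
    rw [← Real.rpow_natCast (r * a^n) 3, Real.mul_rpow hr.le (by positivity),
      ← Real.rpow_natCast a n, ← Real.rpow_mul h2.le]
    push_cast; ring_nf
  have e3 : ((a)^((3:ℝ)-q))^n = a^((n:ℝ)*(3-q)) := by
    rw [← Real.rpow_natCast (a^((3:ℝ)-q)) n, ← Real.rpow_mul h2.le]
    ring_nf
  rw [e1, e2, e3]
  calc r^(-q) * a^((((n:ℝ))+1)*(-q)) * (r^(3:ℝ) * a^((n:ℝ)*3))
      = (r^(-q) * r^(3:ℝ)) * (a^((((n:ℝ))+1)*(-q)) * a^((n:ℝ)*3)) := by ring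
    _ = r^(-q + 3) * a^((((n:ℝ))+1)*(-q) + (n:ℝ)*3) := by
        rw [← Real.rpow_add hr, ← Real.rpow_add h2]
    _ = r^(3 - q) * a^(-q + (n:ℝ)*(3-q)) := by
        rw [show (-q + 3 : ℝ) = 3 - q by ring,
          show ((((n:ℝ))+1)*(-q) + (n:ℝ)*3 : ℝ) = -q + (n:ℝ)*(3-q) by ring]
    _ = r^(3-q) * a^(-q) * a^((n:ℝ)*(3-q)) := by
        rw [Real.rpow_add h2]; ring

lemma kernel_lintegral_bound {q : ℝ} (hq0 : 0 < q) (hq3 : q < 3) :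
    ∃ κ : ℝ≥0∞, κ ≠ ⊤ ∧ ∀ (v : E3) (r : ℝ), 0 < r →
      ∫⁻ w in closedBall v r, ENNReal.ofReal (‖v - w‖ ^ (-q)) ≤
        κ * ENNReal.ofReal (r ^ (3 - q)) := by
  set t : ℝ := (1/2:ℝ) ^ ((3:ℝ) - q) with hts
  have ht0 : 0 ≤ t := Real.rpow_nonneg (by norm_num) _
  have ht1 : t < 1 := Real.rpow_lt_one (by norm_num) (by norm_num) (by linarith)
  have htlt : ENNReal.ofReal t < 1 := by
    rw [← ENNReal.ofReal_one]; exact ENNReal.ofReal_lt_ofReal_iff_of_nonneg ht0 |>.mpr ht1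
  set V : ℝ≥0∞ := volume (ball (0:E3) 1) with hV
  refine ⟨ENNReal.ofReal ((1/2:ℝ)^(-q)) * V * (1 - ENNReal.ofReal t)⁻¹, ?_, ?_⟩
  · refine ENNReal.mul_ne_top (ENNReal.mul_ne_top ENNReal.ofReal_ne_top
      measure_ball_lt_top.ne) (ENNReal.inv_ne_top.mpr ?_)
    intro h
    exact absurd (tsub_eq_zero_iff_le.mp h) (not_le.mpr htlt)
  · intro v r hr
    have key : ∀ n : ℕ,
        ∫⁻ w in (closedBall v (r * (1/2:ℝ) ^ n) \ closedBall v (r * (1/2:ℝ) ^ (n + 1))),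
          ENNReal.ofReal (‖v - w‖ ^ (-q))
          ≤ ENNReal.ofReal ((r^(3-q) * (1/2:ℝ)^(-q)) * t^n) * V := by
      intro n
      have hrn : (0:ℝ) < r * (1/2:ℝ) ^ (n+1) := by positivity
      have hrn' : (0:ℝ) ≤ r * (1/2:ℝ) ^ n := by positivity
      calc ∫⁻ w in (closedBall v (r * (1/2:ℝ) ^ n) \ closedBall v (r * (1/2:ℝ) ^ (n + 1))),
            ENNReal.ofReal (‖v - w‖ ^ (-q))
          ≤ ∫⁻ _ in (closedBall v (r * (1/2:ℝ) ^ n) \ closedBall v (r * (1/2:ℝ) ^ (n + 1))),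
            ENNReal.ofReal ((r * (1/2:ℝ) ^ (n+1)) ^ (-q)) := by
            apply setLIntegral_mono' (measurableSet_closedBall.diff measurableSet_closedBall)
            intro w hw
            apply ENNReal.ofReal_le_ofReal
            apply Real.rpow_le_rpow_of_nonpos hrn _ (by linarith)
            have := hw.2
            rw [mem_closedBall, not_le] at this
            calc r * (1/2:ℝ)^(n+1) ≤ dist w v := this.le
              _ = ‖v - w‖ := by rw [dist_comm, dist_eq_norm]
        _ = ENNReal.ofReal ((r * (1/2:ℝ) ^ (n+1)) ^ (-q)) *
              volume (closedBall v (r * (1/2:ℝ) ^ n) \ closedBall v (r * (1/2:ℝ) ^ (n + 1))) :=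
            setLIntegral_const _ _
        _ ≤ ENNReal.ofReal ((r * (1/2:ℝ) ^ (n+1)) ^ (-q)) *
              volume (closedBall v (r * (1/2:ℝ) ^ n)) := by
            exact mul_le_mul_right (measure_mono diff_subset) _
        _ = ENNReal.ofReal ((r * (1/2:ℝ) ^ (n+1)) ^ (-q)) *
              (ENNReal.ofReal ((r * (1/2:ℝ) ^ n) ^ (3:ℕ)) * V) := by
            rw [Measure.addHaar_closedBall (volume : Measure E3) v hrn',
              finrank_euclideanSpace_fin]
        _ = ENNReal.ofReal ((r^(3-q) * (1/2:ℝ)^(-q)) * t^n) * V := by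
            rw [← mul_assoc, ← ENNReal.ofReal_mul (by positivity), shell_term n hr]
    calc ∫⁻ w in closedBall v r, ENNReal.ofReal (‖v - w‖ ^ (-q))
        ≤ ∫⁻ w in ({v} ∪ ⋃ n : ℕ,
            (closedBall v (r * (1/2:ℝ) ^ n) \ closedBall v (r * (1/2:ℝ) ^ (n + 1)))),
            ENNReal.ofReal (‖v - w‖ ^ (-q)) := lintegral_mono_set (shells_cover hr)
      _ ≤ (∫⁻ w in ({v} : Set E3), ENNReal.ofReal (‖v - w‖ ^ (-q))) +
          ∫⁻ w in (⋃ n : ℕ,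
            (closedBall v (r * (1/2:ℝ) ^ n) \ closedBall v (r * (1/2:ℝ) ^ (n + 1)))),
            ENNReal.ofReal (‖v - w‖ ^ (-q)) := lintegral_union_le _ _ _
      _ ≤ 0 + ∑' n : ℕ, ∫⁻ w in
            (closedBall v (r * (1/2:ℝ) ^ n) \ closedBall v (r * (1/2:ℝ) ^ (n + 1))),
            ENNReal.ofReal (‖v - w‖ ^ (-q)) := by
          gcongr
          · rw [Measure.restrict_eq_zero.mpr (measure_singleton v), lintegral_zero_measure]
          · exact lintegral_iUnion_le _ _
      _ ≤ 0 + ∑' n : ℕ, ENNReal.ofReal ((r^(3-q) * (1/2:ℝ)^(-q)) * t^n) * V := by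
          gcongr with n
          exact key n
      _ = (ENNReal.ofReal ((1/2:ℝ)^(-q)) * V * (1 - ENNReal.ofReal t)⁻¹) *
            ENNReal.ofReal (r ^ (3 - q)) := by
          rw [zero_add]
          have : ∀ n : ℕ, ENNReal.ofReal ((r^(3-q) * (1/2:ℝ)^(-q)) * t^n) * V =
              (ENNReal.ofReal (r^(3-q)) * ENNReal.ofReal ((1/2:ℝ)^(-q)) * V) *
                (ENNReal.ofReal t)^n := by
            intro n
            rw [ENNReal.ofReal_mul (by positivity), ENNReal.ofReal_mul (by positivity),
              ENNReal.ofReal_pow ht0]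
            ring
          rw [tsum_congr this, ENNReal.tsum_mul_left, ENNReal.tsum_geometric]
          ring

lemma near_bound {p q : ℝ} (hpq : Real.HolderConjugate p q)
    {f : E3 → ℝ} (hf0 : ∀ w, 0 ≤ f w) (hmem : MemLp f (ENNReal.ofReal p) volume)
    {κ : ℝ≥0∞} (hκ : κ ≠ ⊤)
    (hκb : ∀ (v : E3) (r : ℝ), 0 < r →
      ∫⁻ w in closedBall v r, ENNReal.ofReal (‖v - w‖ ^ (-q)) ≤
        κ * ENNReal.ofReal (r ^ (3 - q)))
    (v : E3) (r : ℝ) (hr : 0 < r) :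
    Integrable (fun w => f w * (closedBall v r).indicator
        (fun w => ‖v - w‖ ^ (-(1:ℝ))) w) ∧
      ∫ w, f w * (closedBall v r).indicator (fun w => ‖v - w‖ ^ (-(1:ℝ))) w ≤
        (eLpNorm f (ENNReal.ofReal p) volume).toReal * (κ.toReal * r ^ (3-q)) ^ (1/q) := by
  have hq0 : 0 < q := hpq.symm.pos
  set K : E3 → ℝ := fun w => (closedBall v r).indicator (fun w => ‖v - w‖ ^ (-(1:ℝ))) w
    with hK
  have mK : Measurable K := by
    apply Measurable.indicator _ measurableSet_closedBall
    exact ((continuous_const.sub continuous_id).norm).measurable.pow_const _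
  have hK0 : ∀ w, 0 ≤ K w := by
    intro w
    unfold K
    apply Set.indicator_nonneg
    intro x _
    positivity
  have hKq : ∀ w, K w ^ q = (closedBall v r).indicator (fun w => ‖v - w‖ ^ (-q)) w := by
    intro w
    unfold K
    by_cases h : w ∈ closedBall v r
    · simp only [Set.indicator_of_mem h]
      rw [← Real.rpow_mul (norm_nonneg _), neg_one_mul]
    · simp only [Set.indicator_of_notMem h]
      exact Real.zero_rpow hq0.ne'
  have hlint : ∫⁻ w, ENNReal.ofReal (K w ^ q) ≤ κ * ENNReal.ofReal (r ^ (3 - q)) := by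
    have : ∀ w, ENNReal.ofReal (K w ^ q) =
        (closedBall v r).indicator (fun w => ENNReal.ofReal (‖v - w‖ ^ (-q))) w := by
      intro w
      rw [hKq w]
      by_cases h : w ∈ closedBall v r
      · rw [Set.indicator_of_mem h, Set.indicator_of_mem h]
      · rw [Set.indicator_of_notMem h, Set.indicator_of_notMem h, ENNReal.ofReal_zero]
    calc ∫⁻ w, ENNReal.ofReal (K w ^ q)
        = ∫⁻ w, (closedBall v r).indicator (fun w => ENNReal.ofReal (‖v - w‖ ^ (-q))) w :=
          lintegral_congr this
      _ = ∫⁻ w in closedBall v r, ENNReal.ofReal (‖v - w‖ ^ (-q)) :=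
          lintegral_indicator measurableSet_closedBall _
      _ ≤ κ * ENNReal.ofReal (r ^ (3 - q)) := hκb v r hr
  have hlt : ∫⁻ w, ENNReal.ofReal (K w ^ q) < ⊤ :=
    lt_of_le_of_lt hlint (ENNReal.mul_lt_top hκ.lt_top ENNReal.ofReal_lt_top)
  have hmemK : MemLp K (ENNReal.ofReal q) volume := by
    constructor
    · exact mK.aestronglyMeasurable
    · rw [eLpNorm_eq_lintegral_rpow_enorm_toReal (by simpa using hq0) ENNReal.ofReal_ne_top,
        ENNReal.toReal_ofReal hq0.le]
      apply ENNReal.rpow_lt_top_of_nonneg (by positivity)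
      rw [← lt_top_iff_ne_top]
      calc ∫⁻ w, ‖K w‖ₑ ^ q = ∫⁻ w, ENNReal.ofReal (K w ^ q) := by
            apply lintegral_congr
            intro w
            rw [Real.enorm_eq_ofReal (hK0 w), ENNReal.ofReal_rpow_of_nonneg (hK0 w) hq0.le]
        _ < ⊤ := hlt
  have hintKq : ∫ w, K w ^ q ≤ κ.toReal * r ^ (3-q) := by
    rw [integral_eq_lintegral_of_nonneg_ae
        (Filter.Eventually.of_forall fun w => Real.rpow_nonneg (hK0 w) q)
        ((mK.pow_const q).aestronglyMeasurable)]
    calc (∫⁻ w, ENNReal.ofReal (K w ^ q)).toReal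
        ≤ (κ * ENNReal.ofReal (r ^ (3-q))).toReal := by
          apply ENNReal.toReal_mono (ENNReal.mul_ne_top hκ ENNReal.ofReal_ne_top) hlint
      _ = κ.toReal * r ^ (3-q) := by
          rw [ENNReal.toReal_mul, ENNReal.toReal_ofReal (by positivity)]
  have hint : Integrable (fun w => f w * K w) := by
    have h1 : MemLp (f • K) 1 volume := by
      haveI := hpq.ennrealOfReal
      exact MemLp.smul (φ := f) (f := K) hmemK hmem
    rw [memLp_one_iff_integrable] at h1
    exact h1
  refine ⟨hint, ?_⟩
  have holder := integral_mul_le_Lp_mul_Lq_of_nonneg hpq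
    (Filter.Eventually.of_forall hf0) (Filter.Eventually.of_forall hK0) hmem hmemK
  refine le_trans holder ?_
  have e1 : (∫ w, f w ^ p) ^ (1/p) = (eLpNorm f (ENNReal.ofReal p) volume).toReal := by
    rw [hmem.eLpNorm_eq_integral_rpow_norm (by simpa using hpq.pos) ENNReal.ofReal_ne_top,
      ENNReal.toReal_ofReal (by positivity), ENNReal.toReal_ofReal hpq.nonneg]
    rw [one_div]
    congr 1
    apply integral_congr_ae
    exact Filter.Eventually.of_forall fun w => by simp [Real.norm_of_nonneg (hf0 w)]
  rw [e1]
  apply mul_le_mul_of_nonneg_left _ ENNReal.toReal_nonneg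
  apply Real.rpow_le_rpow (integral_nonneg fun w => Real.rpow_nonneg (hK0 w) q) hintKq
    (by positivity)


/-- **Decay of `a[f]`** (inequality (4.2)): for `p > 3/2` there is `C` depending only on
`p`, `‖f‖_{L^p}`, `‖f‖_{L¹}` and the weighted integral
`∫ f (1+|y|)^{3(p−1/2)(p−1)/(p−3/2)} dy`, such that `a[f](v) ≤ C/(1+|v|)`. -/
theorem aFun_decay
    (p : ℝ) (hp : 3/2 < p) (M1 Mp Mq : ℝ) :
    ∃ C : ℝ, ∀ f : E3 → ℝ, (∀ v, 0 ≤ f v) → Integrable f →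
      MemLp f (ENNReal.ofReal p) (volume : Measure E3) →
      (eLpNorm f (ENNReal.ofReal p) volume).toReal ≤ Mp →
      (∫ v : E3, f v) ≤ M1 →
      Integrable
        (fun y : E3 => f y * (1 + ‖y‖) ^ (3 * (p - 1/2) * (p - 1) / (p - 3/2))) →
      (∫ y : E3, f y * (1 + ‖y‖) ^ (3 * (p - 1/2) * (p - 1) / (p - 3/2))) ≤ Mq →
      ∀ v : E3, aFun f v ≤ C / (1 + ‖v‖) := by
  have hp1 : (1:ℝ) < p := by linarith
  have hp1' : (0:ℝ) < p - 1 := by linarith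
  set q : ℝ := p / (p - 1) with hqdef
  have hpq : p.HolderConjugate q := (Real.holderConjugate_iff_eq_conjExponent hp1).2 hqdef
  have hq0 : 0 < q := hpq.symm.pos
  have hq3 : q < 3 := by
    rw [hqdef, div_lt_iff₀ hp1']
    linarith
  have h3q : 0 < 3 - q := by linarith
  set s : ℝ := 3 * (p - 1/2) * (p - 1) / (p - 3/2) with hsdef
  have hp32 : (0:ℝ) < p - 3/2 := by linarith
  have hs0 : 0 ≤ s := by
    apply div_nonneg _ hp32.le
    nlinarith
  set α : ℝ := (3 - q) / q with hadef
  have hα : 0 < α := div_pos h3q hq0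
  have hexp : α⁻¹ + 1 ≤ s := by
    have e2 : α⁻¹ = p / (2*p - 3) := by
      rw [hadef, inv_div, hqdef]
      rw [show 3 - p/(p-1) = (2*p-3)/(p-1) by field_simp; ring]
      rw [div_div_div_cancel_right₀ hp1'.ne']
    rw [e2, hsdef]
    have h2p3 : (0:ℝ) < 2*p - 3 := by linarith
    rw [div_add' _ _ _ h2p3.ne', div_le_div_iff₀ h2p3 hp32]
    nlinarith [mul_nonneg (sq_nonneg (p-1)) h2p3.le]
  obtain ⟨κ, hκtop, hκb⟩ := kernel_lintegral_bound hq0 hq3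
  set CP : ℝ := κ.toReal ^ (1/q) with hCP
  have hCP0 : 0 ≤ CP := Real.rpow_nonneg ENNReal.toReal_nonneg _
  refine ⟨(Mp * CP + 2^s * Mq + 2 * M1) / (4 * π), ?_⟩
  intro f hf0 hfint hmem hMp hM1 hintW hMq v
  have hMp0 : 0 ≤ Mp := le_trans ENNReal.toReal_nonneg hMp
  have hM10 : 0 ≤ M1 := le_trans (integral_nonneg hf0) hM1
  have hMq0 : 0 ≤ Mq := by
    refine le_trans (integral_nonneg fun y => ?_) hMq
    exact mul_nonneg (hf0 y) (Real.rpow_nonneg (by positivity) _)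
  have hv : (0:ℝ) < 1 + ‖v‖ := by positivity
  have hv1 : (1:ℝ) ≤ 1 + ‖v‖ := by linarith [norm_nonneg v]
  set r : ℝ := (1 + ‖v‖) ^ (-α⁻¹) with hrdef
  have hr : 0 < r := Real.rpow_pos_of_pos hv _
  obtain ⟨hI1, hB1⟩ := near_bound hpq hf0 hmem hκtop hκb v r hr
  set K : E3 → ℝ := fun w => (closedBall v r).indicator (fun w => ‖v - w‖ ^ (-(1:ℝ))) w
    with hK
  have hK0 : ∀ w, 0 ≤ K w := by
    intro w
    apply Set.indicator_nonneg
    intro x _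
    positivity
  set c2 : ℝ := r⁻¹ * (2/(1+‖v‖))^s with hc2
  have hc20 : 0 ≤ c2 := by positivity
  set g2 : E3 → ℝ := fun w => c2 * (f w * (1 + ‖w‖)^s) with hg2
  have hI2 : Integrable g2 := hintW.const_mul _
  set c3 : ℝ := 2/(1+‖v‖) with hc3
  have hc30 : 0 ≤ c3 := by positivity
  set g3 : E3 → ℝ := fun w => c3 * f w with hg3
  have hI3 : Integrable g3 := hfint.const_mul _
  -- pointwise domination
  have hdom : ∀ w, f w / ‖v - w‖ ≤ f w * K w + g2 w + g3 w := by
    intro w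
    have hfw := hf0 w
    have hg2w : 0 ≤ g2 w := by
      apply mul_nonneg hc20
      exact mul_nonneg hfw (Real.rpow_nonneg (by positivity) _)
    have hg3w : 0 ≤ g3 w := mul_nonneg hc30 hfw
    have hfKw : 0 ≤ f w * K w := mul_nonneg hfw (hK0 w)
    have hnorm : ‖v - w‖ = dist w v := by rw [dist_comm, dist_eq_norm]
    by_cases h1 : ‖v - w‖ ≤ r
    · -- near region
      have hmem' : w ∈ closedBall v r := by
        rw [mem_closedBall, ← hnorm]; exact h1
      have hKw : K w = ‖v - w‖⁻¹ := by
        simp only [hK, Set.indicator_of_mem hmem']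
        exact Real.rpow_neg_one _
      have : f w / ‖v - w‖ = f w * K w := by
        rw [hKw, div_eq_mul_inv]
      rw [this]
      linarith
    · push_neg at h1
      by_cases h2 : ‖v - w‖ ≤ (1 + ‖v‖)/2
      · -- middle region
        have hb : (1:ℝ) ≤ (2/(1+‖v‖)) * (1 + ‖w‖) := by
          have htri : ‖v‖ - ‖w‖ ≤ ‖v - w‖ := norm_sub_norm_le v w
          rw [div_mul_eq_mul_div, le_div_iff₀ hv]
          linarith
        have hpow : (1:ℝ) ≤ ((2/(1+‖v‖)) * (1 + ‖w‖))^s := by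
          calc (1:ℝ) = 1^s := (Real.one_rpow s).symm
            _ ≤ ((2/(1+‖v‖)) * (1 + ‖w‖))^s := Real.rpow_le_rpow (by norm_num) hb hs0
        have step1 : f w / ‖v - w‖ ≤ f w / r := by
          gcongr
        have step2 : f w / r ≤ g2 w := by
          calc f w / r = r⁻¹ * f w := by rw [div_eq_mul_inv]; ring
            _ = (r⁻¹ * f w) * 1 := by ring
            _ ≤ (r⁻¹ * f w) * ((2/(1+‖v‖)) * (1 + ‖w‖))^s := by
                apply mul_le_mul_of_nonneg_left hpow (by positivity)
            _ = g2 w := by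
                unfold g2 c2
                rw [Real.mul_rpow (by positivity) (by positivity)]
                ring
        linarith
      · -- far region
        push_neg at h2
        have hhalf : (0:ℝ) < (1 + ‖v‖)/2 := by positivity
        have step : f w / ‖v - w‖ ≤ f w / ((1 + ‖v‖)/2) := by
          gcongr
        have : f w / ((1 + ‖v‖)/2) = g3 w := by
          unfold g3 c3
          rw [div_div_eq_mul_div, div_eq_mul_inv, div_eq_mul_inv]
          ring
        linarith [step, this.symm.le]
  -- integrate
  have hI1' : Integrable (fun w => f w * K w) := hI1
  have hB1' : ∫ w, f w * K w ≤
      (eLpNorm f (ENNReal.ofReal p) volume).toReal * (κ.toReal * r ^ (3-q)) ^ (1/q) := hB1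
  have hI12 : Integrable (fun w => f w * K w + g2 w) := hI1'.add hI2
  have hIsum : Integrable (fun w => f w * K w + g2 w + g3 w) := hI12.add hI3
  have hmono : ∫ w, f w / ‖v - w‖ ≤ ∫ w, (f w * K w + g2 w + g3 w) := by
    apply integral_mono_of_nonneg
    · exact Filter.Eventually.of_forall fun w => div_nonneg (hf0 w) (norm_nonneg _)
    · exact hIsum
    · exact Filter.Eventually.of_forall hdom
  have hsplit : ∫ w, (f w * K w + g2 w + g3 w) =
      (∫ w, f w * K w) + (∫ w, g2 w) + ∫ w, g3 w := by
    rw [integral_add hI12 hI3, integral_add hI1' hI2]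
  -- bound each term
  have hral : r ^ α = (1 + ‖v‖)⁻¹ := by
    rw [hrdef, ← Real.rpow_mul hv.le,
      show -α⁻¹ * α = -1 by field_simp, Real.rpow_neg_one]
  have hT1 : ∫ w, f w * K w ≤ Mp * CP * (1 + ‖v‖)⁻¹ := by
    refine le_trans hB1' ?_
    have e : (κ.toReal * r ^ (3-q)) ^ (1/q) = CP * (1 + ‖v‖)⁻¹ := by
      rw [Real.mul_rpow ENNReal.toReal_nonneg (by positivity), hCP]
      congr 1
      rw [← Real.rpow_mul hr.le, mul_one_div, ← hadef, hral]
    rw [e, ← mul_assoc]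
    apply mul_le_mul_of_nonneg_right _ (by positivity)
    exact mul_le_mul_of_nonneg_right hMp hCP0
  have hc2le : c2 ≤ 2^s * (1 + ‖v‖)⁻¹ := by
    have hrinv : r⁻¹ = (1 + ‖v‖) ^ (α⁻¹) := by
      rw [hrdef, Real.rpow_neg hv.le, inv_inv]
    have hdivpow : (2/(1+‖v‖))^s = 2^s / (1+‖v‖)^s := Real.div_rpow (by norm_num) hv.le s
    have : c2 = 2^s * (1 + ‖v‖) ^ (α⁻¹ - s) := by
      rw [hc2, hrinv, hdivpow, Real.rpow_sub hv]
      ring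
    rw [this]
    refine mul_le_mul_of_nonneg_left ?_ (by positivity)
    calc (1 + ‖v‖) ^ (α⁻¹ - s) ≤ (1 + ‖v‖) ^ (-1 : ℝ) :=
          Real.rpow_le_rpow_of_exponent_le hv1 (by linarith)
      _ = (1 + ‖v‖)⁻¹ := Real.rpow_neg_one _
  have hT2 : ∫ w, g2 w ≤ 2^s * Mq * (1 + ‖v‖)⁻¹ := by
    calc ∫ w, g2 w = c2 * ∫ w, f w * (1 + ‖w‖)^s := by
          rw [hg2, integral_const_mul]
      _ ≤ c2 * Mq := mul_le_mul_of_nonneg_left hMq hc20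
      _ ≤ (2^s * (1 + ‖v‖)⁻¹) * Mq := mul_le_mul_of_nonneg_right hc2le hMq0
      _ = 2^s * Mq * (1 + ‖v‖)⁻¹ := by ring
  have hT3 : ∫ w, g3 w ≤ 2 * M1 * (1 + ‖v‖)⁻¹ := by
    calc ∫ w, g3 w = c3 * ∫ w, f w := by rw [hg3, integral_const_mul]
      _ ≤ c3 * M1 := mul_le_mul_of_nonneg_left hM1 hc30
      _ = 2 * M1 * (1 + ‖v‖)⁻¹ := by rw [hc3]; ring
  have htotal : ∫ w, f w / ‖v - w‖ ≤
      (Mp * CP + 2^s * Mq + 2 * M1) * (1 + ‖v‖)⁻¹ := by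
    rw [add_mul, add_mul]
    calc ∫ w, f w / ‖v - w‖ ≤ (∫ w, f w * K w) + (∫ w, g2 w) + ∫ w, g3 w := by
          rw [← hsplit]; exact hmono
      _ ≤ Mp * CP * (1 + ‖v‖)⁻¹ + 2^s * Mq * (1 + ‖v‖)⁻¹ + 2 * M1 * (1 + ‖v‖)⁻¹ := by
          gcongr
  have hpi : (0:ℝ) < 4 * π := by positivity
  calc aFun f v = (1 / (4 * π)) * ∫ w, f w / ‖v - w‖ := rfl
    _ ≤ (1 / (4 * π)) * ((Mp * CP + 2^s * Mq + 2 * M1) * (1 + ‖v‖)⁻¹) := by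
        apply mul_le_mul_of_nonneg_left htotal (by positivity)
    _ = (Mp * CP + 2^s * Mq + 2 * M1) / (4 * π) / (1 + ‖v‖) := by
        field_simp


end
end
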